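/- Regret of one Simple Round Robin cycle: with M players and K ≥ M arms with means μ_{σ₁} > … > μ_{σ_K}, capacities C_{σ_i}, and V the minimal number of top arms covering M players with optimal allocation counts C̃_{σ_i}, the quantity R = K·Σ_{i=1}^{V} μ_{σ_i}·C̃_{σ_i} − M·Σ_{j=1}^{K} μ_{σ_j} satisfies R ≤ M(K−V)(μ_{σ₁} − μ_{σ_K}). -/

import Mathlib

theorem stmt_10 (M K V : ℕ) (μ : ℕ → ℝ) (Ct : ℕ → ℕ)
    (hMK : M ≤ K) (hV1 : 1 ≤ V) (hVK : V ≤ K)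
    (hμmono : ∀ i j, i < j → j < K → μ j < μ i)
    (hμmem : ∀ i < K, μ i ∈ Set.Icc (0:ℝ) 1)
    (hCt : ∀ i ∈ Finset.range V, 1 ≤ Ct i)
    (hsum : ∑ i ∈ Finset.range V, Ct i = M) :
    (K:ℝ) * ∑ i ∈ Finset.range V, μ i * (Ct i : ℝ)
      - (M:ℝ) * ∑ j ∈ Finset.range K, μ j
    ≤ (M:ℝ) * ((K:ℝ) - (V:ℝ)) * (μ 0 - μ (K-1)) := by
  have hVM : V ≤ M := by
    calc V = ∑ i ∈ Finset.range V, 1 := by simp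
    _ ≤ ∑ i ∈ Finset.range V, Ct i := Finset.sum_le_sum hCt
    _ = M := hsum
  have hμ0 : ∀ i < K, μ i ≤ μ 0 := by
    intro i hi
    rcases Nat.eq_zero_or_pos i with h | h
    · simp [h]
    · exact (hμmono 0 i h hi).le
  have hμK : ∀ i, V ≤ i → i < K → μ (K - 1) ≤ μ i := by
    intro i hVi hi
    rcases eq_or_lt_of_le (Nat.le_sub_one_of_lt hi) with h | h
    · rw [h]
    · exact (hμmono i (K - 1) h (Nat.sub_lt (lt_of_lt_of_le hV1 hVK) one_pos)).le
  have hμ0nn : (0:ℝ) ≤ μ 0 := (hμmem 0 (lt_of_lt_of_le hV1 hVK)).1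
  set A := ∑ i ∈ Finset.range V, μ i with hA
  set B := ∑ j ∈ Finset.Ico V K, μ j with hB
  have hsplit : ∑ j ∈ Finset.range K, μ j = A + B := by
    rw [hA, hB, Finset.range_eq_Ico, Finset.range_eq_Ico]
    exact (Finset.sum_Ico_consecutive μ (Nat.zero_le V) hVK).symm
  have h1 : ∑ i ∈ Finset.range V, μ i * (Ct i : ℝ)
      ≤ A + μ 0 * ((M:ℝ) - (V:ℝ)) := by
    have hstep : ∑ i ∈ Finset.range V, μ i * (Ct i : ℝ)
        ≤ ∑ i ∈ Finset.range V, (μ i + μ 0 * ((Ct i : ℝ) - 1)) := by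
      apply Finset.sum_le_sum
      intro i hi
      have hiV : i < V := Finset.mem_range.mp hi
      have hiK : i < K := lt_of_lt_of_le hiV hVK
      have h0 : (0:ℝ) ≤ μ i := (hμmem i hiK).1
      have h1 : μ i ≤ μ 0 := hμ0 i hiK
      have h2 : (1:ℝ) ≤ (Ct i : ℝ) := by exact_mod_cast hCt i hi
      nlinarith
    have heq : ∑ i ∈ Finset.range V, (μ i + μ 0 * ((Ct i : ℝ) - 1))
        = A + μ 0 * ((M:ℝ) - (V:ℝ)) := by
      rw [Finset.sum_add_distrib, ← Finset.mul_sum, Finset.sum_sub_distrib]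
      have : ∑ i ∈ Finset.range V, (Ct i : ℝ) = (M : ℝ) := by
        rw [← Nat.cast_sum, hsum]
      simp [this, hA]
    linarith [hstep, le_of_eq heq]
  have h2 : A ≤ (V:ℝ) * μ 0 := by
    calc A ≤ ∑ i ∈ Finset.range V, μ 0 :=
      Finset.sum_le_sum fun i hi =>
        hμ0 i (lt_of_lt_of_le (Finset.mem_range.mp hi) hVK)
    _ = (V:ℝ) * μ 0 := by simp [mul_comm]
  have h4 : ((K:ℝ) - (V:ℝ)) * μ (K - 1) ≤ B := by
    calc ((K:ℝ) - (V:ℝ)) * μ (K - 1)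
        = ∑ j ∈ Finset.Ico V K, μ (K - 1) := by
          rw [Finset.sum_const, Nat.card_Ico, nsmul_eq_mul]
          congr 1
          have : (V:ℝ) ≤ (K:ℝ) := by exact_mod_cast hVK
          push_cast [Nat.cast_sub hVK]
          ring
    _ ≤ B := Finset.sum_le_sum fun j hj =>
        hμK j (Finset.mem_Ico.mp hj).1 (Finset.mem_Ico.mp hj).2
  have hMKr : (M:ℝ) ≤ (K:ℝ) := by exact_mod_cast hMK
  have hVMr : (V:ℝ) ≤ (M:ℝ) := by exact_mod_cast hVM
  have hKpos : (0:ℝ) ≤ (K:ℝ) := Nat.cast_nonneg K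
  have hMpos : (0:ℝ) ≤ (M:ℝ) := Nat.cast_nonneg M
  rw [hsplit]
  have hK1 : (K:ℝ) * ∑ i ∈ Finset.range V, μ i * (Ct i : ℝ)
      ≤ (K:ℝ) * (A + μ 0 * ((M:ℝ) - (V:ℝ))) :=
    mul_le_mul_of_nonneg_left h1 hKpos
  have hK2 : ((K:ℝ) - (M:ℝ)) * A ≤ ((K:ℝ) - (M:ℝ)) * ((V:ℝ) * μ 0) :=
    mul_le_mul_of_nonneg_left h2 (by linarith)
  have hK4 : (M:ℝ) * (((K:ℝ) - (V:ℝ)) * μ (K - 1)) ≤ (M:ℝ) * B :=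
    mul_le_mul_of_nonneg_left h4 hMpos
  nlinarith [hK1, hK2, hK4]
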